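/- Let p be a real number that is not a nonnegative integer, and define the polynomials G_n(p) ∈ ℝ[t] by G_0(p) = 1 and G_n(p) = (p/n) Σ_{k=1}^{n} (−1)^{k+1} B_k · G_{n−k}(p) for n ≥ 1, where B_k ∈ ℝ[t] is the k-th Bernoulli polynomial. Then for every n ≥ 0, the polynomial G_n(p) has degree exactly n in t. -/

import Mathlib

open Finset Polynomial

/-- The `k`-th Bernoulli polynomial as a real polynomial
(generating function `u e^{tu}/(e^u - 1)`, so `bernR 1 = X - 1/2`). -/
noncomputable def bernR (k : ℕ) : Polynomial ℝ :=
  (Polynomial.bernoulli k).map (algebraMap ℚ ℝ)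

noncomputable def gbinom (p : ℝ) (n : ℕ) : ℝ :=
  (∏ i ∈ Finset.range n, (p - i)) / n.factorial

lemma gbinom_ne_zero (p : ℝ) (hp : ∀ m : ℕ, p ≠ (m : ℝ)) (n : ℕ) : gbinom p n ≠ 0 := by
  apply div_ne_zero
  · exact Finset.prod_ne_zero_iff.2 fun i _ => sub_ne_zero.2 (hp i)
  · exact_mod_cast n.factorial_ne_zero

lemma alt_sum (p : ℝ) (m : ℕ) :
    ∑ j ∈ Finset.range (m + 1), (-1 : ℝ) ^ j * gbinom p j
      = (-1) ^ m * ((∏ i ∈ Finset.range m, (p - 1 - i)) / m.factorial) := by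
  induction m with
  | zero => simp [gbinom]
  | succ m ih =>
      rw [Finset.sum_range_succ, ih]
      have hprod : ∏ i ∈ Finset.range (m + 1), (p - i)
          = (∏ i ∈ Finset.range m, (p - 1 - i)) * p := by
        rw [Finset.prod_range_succ']
        simp only [Nat.cast_zero, sub_zero]
        congr 1
        exact Finset.prod_congr rfl fun i _ => by push_cast; ring
      have hprod2 : ∏ i ∈ Finset.range (m + 1), (p - 1 - i)
          = (∏ i ∈ Finset.range m, (p - 1 - i)) * (p - 1 - m) :=
        Finset.prod_range_succ _ _
      have hfac : ((m + 1).factorial : ℝ) = (m + 1) * m.factorial := by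
        push_cast [Nat.factorial_succ]; ring
      have hm : (m.factorial : ℝ) ≠ 0 := by exact_mod_cast m.factorial_ne_zero
      have hm1 : ((m : ℝ) + 1) ≠ 0 := by positivity
      rw [gbinom, hprod, hprod2, hfac]
      field_simp
      ring

lemma gbinom_rec (p : ℝ) (m : ℕ) :
    p / (m + 1 : ℕ) * ∑ k ∈ Finset.Icc 1 (m + 1), (-1 : ℝ) ^ (k + 1) * gbinom p (m + 1 - k)
      = gbinom p (m + 1) := by
  have h1 : ∑ k ∈ Finset.Icc 1 (m + 1), (-1 : ℝ) ^ (k + 1) * gbinom p (m + 1 - k)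
      = ∑ i ∈ Finset.range (m + 1), (-1 : ℝ) ^ i * gbinom p (m - i) := by
    rw [← Finset.Ico_add_one_right_eq_Icc, Finset.sum_Ico_eq_sum_range]
    simp only [show m + 1 + 1 - 1 = m + 1 from rfl]
    refine Finset.sum_congr rfl fun i _ => ?_
    have : (-1 : ℝ) ^ (1 + i + 1) = (-1) ^ i := by
      rw [show 1 + i + 1 = i + 2 by ring, pow_add]; simp
    rw [this]
    congr 2
    omega
  have h2 : ∑ i ∈ Finset.range (m + 1), (-1 : ℝ) ^ i * gbinom p (m - i)
      = ∑ j ∈ Finset.range (m + 1), (-1 : ℝ) ^ (m - j) * gbinom p j := by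
    rw [← Finset.sum_range_reflect]
    refine Finset.sum_congr rfl fun j hj => ?_
    have hj' := Finset.mem_range.1 hj
    simp only [Nat.add_sub_cancel]
    congr 2
    omega
  have h3 : ∀ j ∈ Finset.range (m + 1), (-1 : ℝ) ^ (m - j) * gbinom p j
      = (-1) ^ m * ((-1) ^ j * gbinom p j) := by
    intro j hj
    have hj' : j ≤ m := Nat.lt_succ_iff.1 (Finset.mem_range.1 hj)
    have hsq : ((-1 : ℝ) ^ j) * ((-1) ^ j) = 1 := by
      rw [← pow_add]; simp [pow_add, pow_mul, ← two_mul]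
    have : (-1 : ℝ) ^ m = (-1) ^ (m - j) * (-1) ^ j := by
      rw [← pow_add, Nat.sub_add_cancel hj']
    calc (-1 : ℝ) ^ (m - j) * gbinom p j
        = (-1) ^ (m - j) * (((-1 : ℝ) ^ j) * ((-1) ^ j)) * gbinom p j := by rw [hsq]; ring
      _ = (-1) ^ m * ((-1) ^ j * gbinom p j) := by rw [this]; ring
  rw [h1, h2, Finset.sum_congr rfl h3, ← Finset.mul_sum, alt_sum]
  have hprod : ∏ i ∈ Finset.range (m + 1), (p - i)
      = (∏ i ∈ Finset.range m, (p - 1 - i)) * p := by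
    rw [Finset.prod_range_succ']
    simp only [Nat.cast_zero, sub_zero]
    congr 1
    exact Finset.prod_congr rfl fun i _ => by push_cast; ring
  have hfac : ((m + 1).factorial : ℝ) = (m + 1) * m.factorial := by
    push_cast [Nat.factorial_succ]; ring
  have hm : (m.factorial : ℝ) ≠ 0 := by exact_mod_cast m.factorial_ne_zero
  have hm1 : ((m : ℝ) + 1) ≠ 0 := by positivity
  have hsgn : ((-1 : ℝ) ^ m) * ((-1) ^ m) = 1 := by
    rw [← pow_add]; simp [pow_add, pow_mul, ← two_mul]
  have hkey : (-1:ℝ)^m * ((-1)^m * ((∏ i ∈ Finset.range m, (p - 1 - (i:ℝ))) / m.factorial))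
      = (∏ i ∈ Finset.range m, (p - 1 - (i:ℝ))) / m.factorial := by
    rw [← mul_assoc, hsgn, one_mul]
  rw [hkey, gbinom, hprod, hfac]
  push_cast
  field_simp

lemma bernR_natDegree_le (k : ℕ) : (bernR k).natDegree ≤ k := by
  refine Polynomial.natDegree_map_le.trans ?_
  rw [Polynomial.bernoulli_def]
  refine Polynomial.natDegree_sum_le_of_forall_le _ _ fun i hi => ?_
  exact (Polynomial.natDegree_monomial_le _).trans (by
    have := Finset.mem_range.1 hi; omega)

lemma bernR_coeff_self (k : ℕ) : (bernR k).coeff k = 1 := by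
  rw [bernR, Polynomial.coeff_map]
  have : (Polynomial.bernoulli k).coeff k = 1 := by
    rw [Polynomial.bernoulli_def, Polynomial.finset_sum_coeff]
    simp only [Polynomial.coeff_monomial]
    rw [Finset.sum_ite_eq' (Finset.range (k + 1)) k]
    simp
  rw [this]; simp

/-- if `p` is not a nonnegative integer, then the polynomial
`Gₙ(p) ∈ ℝ[t]` has degree exactly `n`. -/
theorem G_degree_of_not_nat
    (p : ℝ) (hp : ∀ m : ℕ, p ≠ (m : ℝ))
    (G : ℕ → Polynomial ℝ) (hG0 : G 0 = 1)
    (hG : ∀ n : ℕ, 1 ≤ n →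
      G n = Polynomial.C (p / (n : ℝ)) *
        ∑ k ∈ Finset.Icc 1 n, (-1 : Polynomial ℝ) ^ (k + 1) * bernR k * G (n - k)) :
    ∀ n : ℕ, (G n).degree = n := by
  have key : ∀ n : ℕ, (G n).natDegree ≤ n ∧ (G n).coeff n = gbinom p n := by
    intro n
    induction n using Nat.strong_induction_on with
    | _ n ih =>
      cases n with
      | zero =>
          constructor
          · simp [hG0]
          · simp [hG0, gbinom]
      | succ m =>
          have hrec := hG (m + 1) (by omega)
          have hterm_deg : ∀ k ∈ Finset.Icc 1 (m + 1),
              ((-1 : Polynomial ℝ) ^ (k + 1) * bernR k * G (m + 1 - k)).natDegree ≤ m + 1 := by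
            intro k hk
            obtain ⟨hk1, hk2⟩ := Finset.mem_Icc.1 hk
            have h1 : ((-1 : Polynomial ℝ) ^ (k + 1)).natDegree = 0 := by
              simp [Polynomial.natDegree_pow]
            have h2 := (ih (m + 1 - k) (by omega)).1
            calc ((-1 : Polynomial ℝ) ^ (k + 1) * bernR k * G (m + 1 - k)).natDegree
                ≤ ((-1 : Polynomial ℝ) ^ (k + 1) * bernR k).natDegree
                    + (G (m + 1 - k)).natDegree := Polynomial.natDegree_mul_le
              _ ≤ (((-1 : Polynomial ℝ) ^ (k + 1)).natDegree + (bernR k).natDegree)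
                    + (G (m + 1 - k)).natDegree := by
                    exact Nat.add_le_add_right Polynomial.natDegree_mul_le _
              _ ≤ (0 + k) + (m + 1 - k) := by
                    gcongr
                    · exact le_of_eq h1
                    · exact bernR_natDegree_le k
              _ ≤ m + 1 := by omega
          have hcoeff : ∀ k ∈ Finset.Icc 1 (m + 1),
              ((-1 : Polynomial ℝ) ^ (k + 1) * bernR k * G (m + 1 - k)).coeff (m + 1)
                = (-1 : ℝ) ^ (k + 1) * gbinom p (m + 1 - k) := by
            intro k hk
            obtain ⟨hk1, hk2⟩ := Finset.mem_Icc.1 hk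
            have hC : (-1 : Polynomial ℝ) ^ (k + 1) = Polynomial.C ((-1 : ℝ) ^ (k + 1)) := by
              simp
            have hmul := Polynomial.coeff_mul_add_eq_of_natDegree_le
              (bernR_natDegree_le k) (ih (m + 1 - k) (by omega)).1
            rw [show k + (m + 1 - k) = m + 1 by omega] at hmul
            rw [hC, mul_assoc, Polynomial.coeff_C_mul, hmul, bernR_coeff_self,
              (ih (m + 1 - k) (by omega)).2, one_mul]
          constructor
          · rw [hrec]
            exact (Polynomial.natDegree_C_mul_le _ _).trans
              (Polynomial.natDegree_sum_le_of_forall_le _ _ hterm_deg)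
          · rw [hrec, Polynomial.coeff_C_mul, Polynomial.finset_sum_coeff,
              Finset.sum_congr rfl hcoeff]
            exact_mod_cast gbinom_rec p m
  intro n
  obtain ⟨h1, h2⟩ := key n
  refine Polynomial.degree_eq_of_le_of_coeff_ne_zero
    (Polynomial.degree_le_of_natDegree_le h1) ?_
  rw [h2]
  exact gbinom_ne_zero p hp n
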